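/- Let H be a graph and L a list assignment of H with |L(v)| ≥ deg(v) + 1 for every vertex v. If c is a proper L-colouring of H sampled uniformly at random, then for any fixed colour x, the probability that c(v) ≠ x for all vertices v of H is at least ∏_{v ∈ V(H)} (1 − 1/(|L(v)| − deg(v))). -/

import Mathlib

open Finset


lemma key_count {V : Type*} [Fintype V] [DecidableEq V]
    (A : Finset (V → ℕ)) (v : V) (x : ℕ) (k : ℕ)
    (H1 : ∀ c ∈ A, k ≤ (A.filter
        (fun d => Function.update d v 0 = Function.update c v 0)).card)
    (H2 : ∀ c ∈ A, ∀ d ∈ A, Function.update d v 0 = Function.update c v 0 →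
        c v = x → d v = x → c = d) :
    k * (A.filter (fun c => c v = x)).card ≤ A.card := by
  classical
  set ρ : (V → ℕ) → (V → ℕ) := fun c => Function.update c v 0 with hρ
  set B := A.filter (fun c => c v = x) with hB
  have hBA : B ⊆ A := filter_subset _ _
  have himg : (B.image ρ) ⊆ A.image ρ := image_subset_image hBA
  have hcard : A.card = ∑ r ∈ A.image ρ, (A.filter (fun a => ρ a = r)).card :=
    card_eq_sum_card_fiberwise (fun a ha => mem_image_of_mem ρ ha)
  have hinj : Set.InjOn ρ B := by
    intro c hc d hd h
    simp only [hB, mem_coe, mem_filter] at hc hd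
    exact H2 c hc.1 d hd.1 h.symm hc.2 hd.2
  have hBcard : (B.image ρ).card = B.card := card_image_of_injOn hinj
  calc k * B.card = ∑ _r ∈ B.image ρ, k := by
        rw [sum_const, hBcard, smul_eq_mul, mul_comm]
    _ ≤ ∑ r ∈ B.image ρ, (A.filter (fun a => ρ a = r)).card := by
        apply sum_le_sum
        intro r hr
        obtain ⟨c, hc, rfl⟩ := mem_image.mp hr
        exact H1 c (hBA hc)
    _ ≤ ∑ r ∈ A.image ρ, (A.filter (fun a => ρ a = r)).card :=
        sum_le_sum_of_subset himg
    _ = A.card := hcard.symm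

lemma avoid_induction {V : Type*} [Fintype V] [DecidableEq V]
    (H : SimpleGraph V) [DecidableRel H.Adj] (L : V → Finset ℕ)
    (hL : ∀ v, H.degree v + 1 ≤ (L v).card) (x : ℕ) (S : Finset V) :
    (∏ v ∈ S, (1 - 1 / (((L v).card : ℝ) - H.degree v))) *
      (((Fintype.piFinset L).filter
        (fun c => (∀ u v, H.Adj u v → c u ≠ c v) ∧ ∀ w ∈ (∅ : Finset V), c w ≠ x)).card : ℝ) ≤
    (((Fintype.piFinset L).filter
      (fun c => (∀ u v, H.Adj u v → c u ≠ c v) ∧ ∀ w ∈ S, c w ≠ x)).card : ℝ) := by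
  classical
  induction S using Finset.induction with
  | empty => simp
  | insert _ _ hv ih =>
    rename_i v S
    set A : Finset V → Finset (V → ℕ) := fun T => (Fintype.piFinset L).filter
        (fun c => (∀ u v, H.Adj u v → c u ≠ c v) ∧ ∀ w ∈ T, c w ≠ x) with hA
    have hdeg : H.degree v ≤ (L v).card := le_trans (Nat.le_succ _) (hL v)
    set k : ℕ := (L v).card - H.degree v with hk
    have hk1 : 1 ≤ k := by have := hL v; omega
    have hkR : ((L v).card : ℝ) - H.degree v = (k : ℝ) := by
      rw [hk, Nat.cast_sub hdeg]
    have hkpos : (0:ℝ) < (k:ℝ) := by exact_mod_cast hk1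
    have hfnn : (0:ℝ) ≤ 1 - 1 / (k:ℝ) := by
      rw [sub_nonneg, div_le_one hkpos]
      exact_mod_cast hk1
    -- the key counting step
    have hH1 : ∀ c ∈ A S, k ≤ ((A S).filter
        (fun d => Function.update d v 0 = Function.update c v 0)).card := by
      intro c hc
      simp only [hA, mem_filter] at hc
      obtain ⟨hcpi, hcproper, hcS⟩ := hc
      set avail : Finset ℕ := (L v).filter (fun y => ∀ u, H.Adj u v → y ≠ c u) with havail
      have hsub : (L v) \ ((H.neighborFinset v).image c) ⊆ avail := by
        intro y hy
        rw [mem_sdiff] at hy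
        rw [havail, mem_filter]
        refine ⟨hy.1, fun u hu hyu => hy.2 ?_⟩
        rw [mem_image]
        exact ⟨u, by rwa [SimpleGraph.mem_neighborFinset, SimpleGraph.adj_comm], hyu.symm⟩
      have h1 : k ≤ avail.card := by
        have h2 : ((H.neighborFinset v).image c).card ≤ H.degree v := by
          calc ((H.neighborFinset v).image c).card ≤ (H.neighborFinset v).card :=
                card_image_le
            _ = H.degree v := H.card_neighborFinset_eq_degree v
        calc k ≤ (L v).card - ((H.neighborFinset v).image c).card := by omega
          _ ≤ ((L v) \ ((H.neighborFinset v).image c)).card := le_card_sdiff _ _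
          _ ≤ avail.card := card_le_card hsub
      refine le_trans h1 (card_le_card_of_injOn (Function.update c v) ?_ ?_)
      · intro y hy
        rw [havail, mem_coe, mem_filter] at hy
        obtain ⟨hyL, hyavoid⟩ := hy
        rw [mem_coe, mem_filter]
        refine ⟨?_, ?_⟩
        · rw [hA, mem_filter]
          refine ⟨?_, ?_, ?_⟩
          · rw [Fintype.mem_piFinset]
            intro w
            rcases eq_or_ne w v with rfl | hwv
            · simpa using hyL
            · rw [Function.update_of_ne hwv]
              exact Fintype.mem_piFinset.mp hcpi w
          · intro a b hab
            rcases eq_or_ne a v with rfl | hav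
            · rw [Function.update_self, Function.update_of_ne hab.ne']
              exact hyavoid b hab.symm
            · rw [Function.update_of_ne hav]
              rcases eq_or_ne b v with rfl | hbv
              · rw [Function.update_self]
                exact fun h => hyavoid a hab h.symm
              · rw [Function.update_of_ne hbv]
                exact hcproper a b hab
          · intro w hwS
            rw [Function.update_of_ne (fun h => hv (by rw [← h]; exact hwS))]
            exact hcS w hwS
        · exact Function.update_idem ..
      · intro y hy z hz hyz
        have := congrFun hyz v
        simpa using this
    have hH2 : ∀ c ∈ A S, ∀ d ∈ A S, Function.update d v 0 = Function.update c v 0 →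
        c v = x → d v = x → c = d := by
      intro c _ d _ heq hcx hdx
      funext w
      rcases eq_or_ne w v with rfl | hwv
      · rw [hcx, hdx]
      · have := congrFun heq w
        rw [Function.update_of_ne hwv, Function.update_of_ne hwv] at this
        exact this.symm
    have hkey : k * ((A S).filter (fun c => c v = x)).card ≤ (A S).card :=
      key_count (A S) v x k hH1 hH2
    -- card of A (insert v S)
    have hAins : A (insert v S) = (A S).filter (fun c => ¬ c v = x) := by
      ext c
      simp only [hA, mem_filter, forall_mem_insert]
      tauto
    set Bc := ((A S).filter (fun c => c v = x)).card with hBc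
    set Nc := (A S).card with hNc
    have hBle : Bc ≤ Nc := card_le_card (filter_subset _ _)
    have hsplit : Bc + (A (insert v S)).card = Nc := by
      rw [hAins, hBc, hNc]
      exact card_filter_add_card_filter_not (s := A S) (fun c => c v = x)
    have hcardins : ((A (insert v S)).card : ℝ) = (Nc : ℝ) - Bc := by
      have : (A (insert v S)).card = Nc - Bc := Nat.eq_sub_of_add_eq' hsplit
      rw [this, Nat.cast_sub hBle]
    -- put it together
    rw [prod_insert hv, hkR]
    have hkeyR : (k:ℝ) * Bc ≤ (Nc:ℝ) := by exact_mod_cast hkey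
    have hstep2 : (1 - 1 / (k:ℝ)) * Nc ≤ (Nc:ℝ) - Bc := by
      have hinv : (1 / (k:ℝ)) * k = 1 := by field_simp
      nlinarith [hkeyR, hkpos, hinv]
    calc (1 - 1 / (k:ℝ)) * (∏ w ∈ S, (1 - 1 / (((L w).card : ℝ) - H.degree w))) *
          ((A ∅).card : ℝ)
        = (1 - 1 / (k:ℝ)) * ((∏ w ∈ S, (1 - 1 / (((L w).card : ℝ) - H.degree w))) *
          ((A ∅).card : ℝ)) := by ring
      _ ≤ (1 - 1 / (k:ℝ)) * (Nc : ℝ) := mul_le_mul_of_nonneg_left ih hfnn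
      _ ≤ (Nc : ℝ) - Bc := hstep2
      _ = ((A (insert v S)).card : ℝ) := hcardins.symm

/-- For a uniformly random proper `L`-colouring of `H` (formalised as a ratio of
counts), the probability that a fixed colour `x` is avoided everywhere is at least
`∏_v (1 - 1/(|L v| - deg v))`. -/
theorem avoid_color_probability {V : Type*} [Fintype V] [DecidableEq V]
    (H : SimpleGraph V) [DecidableRel H.Adj] (L : V → Finset ℕ)
    (hL : ∀ v, H.degree v + 1 ≤ (L v).card) (x : ℕ) :
    (((Fintype.piFinset L).filter
        (fun c => ∀ u v, H.Adj u v → c u ≠ c v)).filter (fun c => ∀ v, c v ≠ x)).card ≥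
      (∏ v : V, (1 - 1 / (((L v).card : ℝ) - H.degree v))) *
        ((Fintype.piFinset L).filter (fun c => ∀ u v, H.Adj u v → c u ≠ c v)).card := by
  classical
  have h := avoid_induction H L hL x Finset.univ
  have e1 : ((Fintype.piFinset L).filter
        (fun c => ∀ u v, H.Adj u v → c u ≠ c v)).filter (fun c => ∀ v, c v ≠ x) =
      (Fintype.piFinset L).filter
        (fun c => (∀ u v, H.Adj u v → c u ≠ c v) ∧ ∀ w ∈ Finset.univ, c w ≠ x) := by
    rw [filter_filter]
    apply filter_congr
    intro c _
    simp
  have e2 : (Fintype.piFinset L).filter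
        (fun c => (∀ u v, H.Adj u v → c u ≠ c v) ∧ ∀ w ∈ (∅ : Finset V), c w ≠ x) =
      (Fintype.piFinset L).filter (fun c => ∀ u v, H.Adj u v → c u ≠ c v) := by
    apply filter_congr
    intro c _
    simp
  rw [e2] at h
  rw [ge_iff_le, e1]
  exact h
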